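/- In any feasible schedule for the MAPF instance of the vertex-cover hardness reduction, a red edge of size c attached to a leaf u of the host tree (with unique tree-neighbor w) requires at least c + 1 turns to resolve all its c agents, and its agents occupy w during at least c - 1 turns, assuming these agents never leave {their leaves} ∪ {u, w}. -/

import Mathlib

/-- Vertices of the red-edge gadget: the attachment leaf `u`, its unique
tree-neighbor `w`, and the `c` leaves of the red edge. -/
inductive RedV (c : ℕ) : Type
  | u : RedV c
  | w : RedV c
  | leaf (i : Fin c) : RedV c

/-- Adjacency of the red-edge gadget: `u` is adjacent to `w` and to every leaf. -/
def RedV.adj {c : ℕ} : RedV c → RedV c → Prop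
  | .u, .w => True
  | .w, .u => True
  | .u, .leaf _ => True
  | .leaf _, .u => True
  | _, _ => False

namespace RedEdgeAux

variable {c : ℕ}

/-- Equivalence with a sum type, for counting. -/
def equivSum : RedV c ≃ (Fin c ⊕ Bool) where
  toFun := fun v => match v with
    | .u => .inr false
    | .w => .inr true
    | .leaf i => .inl i
  invFun := fun x => match x with
    | .inl i => .leaf i
    | .inr false => .u
    | .inr true => .w
  left_inv := by intro x; cases x <;> rfl
  right_inv := by rintro (i | b); · rfl
                  · cases b <;> rfl

instance : DecidableEq (RedV c) := equivSum.decidableEq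

noncomputable instance : Fintype (RedV c) := Fintype.ofEquiv _ equivSum.symm

lemma card_redV : Fintype.card (RedV c) = c + 2 := by
  rw [Fintype.card_congr (equivSum (c := c))]
  simp

lemma no_three_empty (hc : 2 ≤ c) (f : Fin c → RedV c) (hf : Function.Injective f)
    (v1 v2 v3 : RedV c) (h12 : v1 ≠ v2) (h13 : v1 ≠ v3) (h23 : v2 ≠ v3)
    (h1 : ∀ x, f x ≠ v1) (h2 : ∀ x, f x ≠ v2) (h3 : ∀ x, f x ≠ v3) : False := by
  classical
  have hsub : (Finset.univ.image f) ⊆ Finset.univ \ {v1, v2, v3} := by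
    intro v hv
    simp only [Finset.mem_image] at hv
    obtain ⟨x, -, rfl⟩ := hv
    simp [h1 x, h2 x, h3 x]
  have hcard := Finset.card_le_card hsub
  rw [Finset.card_image_of_injective _ hf, Finset.card_univ, Fintype.card_fin,
    Finset.card_sdiff_of_subset (Finset.subset_univ _), Finset.card_univ, card_redV] at hcard
  have h3c : ({v1, v2, v3} : Finset (RedV c)).card = 3 := by
    rw [Finset.card_insert_of_notMem (by simp [h12, h13]),
      Finset.card_insert_of_notMem (by simp [h23]), Finset.card_singleton]
  rw [h3c] at hcard
  omega
lemma adj_to_leaf {v : RedV c} {l : Fin c} (h : RedV.adj v (RedV.leaf l)) : v = RedV.u := by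
  cases v with
  | u => rfl
  | w => exact h.elim
  | leaf i => exact h.elim

lemma adj_from_leaf {v : RedV c} {l : Fin c} (h : RedV.adj (RedV.leaf l) v) : v = RedV.u := by
  cases v with
  | u => rfl
  | w => exact h.elim
  | leaf i => exact h.elim

section Schedule

variable {m : ℕ} (S : ℕ → Fin c → RedV c)

/-- agent `x` enters leaf `l` at step `t → t+1`. -/
def entersAt (t : ℕ) (x : Fin c) (l : Fin c) : Prop :=
  S (t + 1) x = RedV.leaf l ∧ S t x ≠ RedV.leaf l

open Classical in
/-- the evolving leaf-assignment permutation. -/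
noncomputable def gseq : ℕ → Equiv.Perm (Fin c) := fun t =>
  Nat.rec 1 (fun t g =>
    if h : ∃ p : Fin c × Fin c, entersAt S t p.1 p.2 ∧ g p.1 ≠ p.2 then
      (Equiv.swap (g h.choose.1) h.choose.2) * g
    else g) t

lemma gseq_zero : gseq S 0 = 1 := rfl

lemma gseq_step (t : ℕ) :
    (gseq S (t + 1) = gseq S t ∧ ∀ x l, entersAt S t x l → gseq S t x = l) ∨
    (∃ x l, entersAt S t x l ∧ gseq S t x ≠ l ∧
      gseq S (t + 1) = Equiv.swap (gseq S t x) l * gseq S t) := by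
  classical
  have hdef : gseq S (t + 1) =
      if h : ∃ p : Fin c × Fin c, entersAt S t p.1 p.2 ∧ gseq S t p.1 ≠ p.2 then
        (Equiv.swap (gseq S t h.choose.1) h.choose.2) * gseq S t
      else gseq S t := by
    simp only [gseq]
    rfl
  by_cases h : ∃ p : Fin c × Fin c, entersAt S t p.1 p.2 ∧ gseq S t p.1 ≠ p.2
  · right
    obtain ⟨hent, hne⟩ := h.choose_spec
    exact ⟨h.choose.1, h.choose.2, hent, hne, by rw [hdef, dif_pos h]⟩
  · left
    refine ⟨by rw [hdef, dif_neg h], ?_⟩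
    intro x l hx
    by_contra hne
    exact h ⟨(x, l), hx, hne⟩

variable (hinj : ∀ t, Function.Injective (S t))
  (hmove : ∀ t, t < m → ∀ x, S (t + 1) x = S t x ∨ RedV.adj (S t x) (S (t + 1) x))
  (hswap : ∀ t, t < m → ∀ a b, a ≠ b → ¬(S (t + 1) a = S t b ∧ S (t + 1) b = S t a))
  (hstable : ∀ t, m ≤ t → S (t + 1) = S t)
  (hstart : ∀ x, S 0 x = RedV.leaf x)

include hstable in
lemma enter_lt {t : ℕ} {x l : Fin c} (h : entersAt S t x l) : t < m := by
  by_contra hge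
  have h1 := h.1
  rw [hstable t (le_of_not_gt hge)] at h1
  exact h.2 h1

include hmove hstable in
lemma enter_from_u {t : ℕ} {x l : Fin c} (h : entersAt S t x l) : S t x = RedV.u := by
  rcases hmove t (enter_lt S hstable h) x with he | ha
  · exact absurd (he ▸ h.1) h.2
  · rw [h.1] at ha
    exact adj_to_leaf ha

include hinj hmove hstable in
lemma enter_unique {t : ℕ} {x l x' l' : Fin c} (h : entersAt S t x l)
    (h' : entersAt S t x' l') : x = x' ∧ l = l' := by
  have hx := enter_from_u S hmove hstable h
  have hx' := enter_from_u S hmove hstable h'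
  have hxx : x = x' := hinj t (hx.trans hx'.symm)
  subst hxx
  have := h.1.symm.trans h'.1
  exact ⟨rfl, RedV.leaf.inj this⟩

include hinj hmove hswap hstable in
lemma enter_empty {t : ℕ} {x l : Fin c} (h : entersAt S t x l) :
    ∀ b, S t b ≠ RedV.leaf l := by
  intro b hb
  have ht := enter_lt S hstable h
  have hxu := enter_from_u S hmove hstable h
  have hbx : b ≠ x := by
    rintro rfl
    rw [hxu] at hb
    cases hb
  have h2 : S (t + 1) b ≠ RedV.leaf l := by
    intro he
    exact hbx (hinj (t + 1) (he.trans h.1.symm))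
  rcases hmove t ht b with he | ha
  · exact h2 (he.trans hb)
  · rw [hb] at ha
    have hbu := adj_from_leaf ha
    exact hswap t ht x b (Ne.symm hbx) ⟨h.1.trans hb.symm, hbu.trans hxu.symm⟩

include hinj hmove hswap hstable hstart in
lemma ginv : ∀ t, ∀ x l, S t x = RedV.leaf l → gseq S t x = l := by
  intro t
  induction t with
  | zero =>
    intro x l hx
    have := (hstart x).symm.trans hx
    rw [gseq_zero]
    simpa using RedV.leaf.inj this
  | succ t ih =>
    intro y ly hy
    rcases gseq_step S t with ⟨heq, hmatch⟩ | ⟨x, l, hent, hne, heq⟩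
    · rw [heq]
      by_cases hstay : S t y = RedV.leaf ly
      · exact ih y ly hstay
      · exact hmatch y ly ⟨hy, hstay⟩
    · rw [heq]
      by_cases hstay : S t y = RedV.leaf ly
      · have hgy := ih y ly hstay
        have hyx : y ≠ x := by
          rintro rfl
          rw [enter_from_u S hmove hstable hent] at hstay
          cases hstay
        have hl1 : ly ≠ l := by
          rintro rfl
          exact enter_empty S hinj hmove hswap hstable hent y hstay
        have hl2 : ly ≠ gseq S t x := by
          intro hh
          exact hyx ((gseq S t).injective (hgy.trans (hh.trans rfl)))
        rw [Equiv.Perm.mul_apply, hgy, Equiv.swap_apply_of_ne_of_ne hl2 hl1]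
      · have hEnt : entersAt S t y ly := ⟨hy, hstay⟩
        obtain ⟨hxy, hll⟩ := enter_unique S hinj hmove hstable hent hEnt
        subst hxy; subst hll
        rw [Equiv.Perm.mul_apply, Equiv.swap_apply_left]

include hinj hmove hswap hstable hstart in
lemma emits_w (hc : 2 ≤ c) {t : ℕ} (h : gseq S (t + 1) ≠ gseq S t) :
    t < m ∧ ∃ z, S t z = RedV.w := by
  rcases gseq_step S t with ⟨heq, -⟩ | ⟨x, l, hent, hne, heq⟩
  · exact absurd heq h
  refine ⟨enter_lt S hstable hent, ?_⟩
  by_contra hw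
  push_neg at hw
  have hxu := enter_from_u S hmove hstable hent
  have hl : ∀ b, S t b ≠ RedV.leaf l := enter_empty S hinj hmove hswap hstable hent
  have hgl : ∀ b, S t b ≠ RedV.leaf (gseq S t x) := by
    intro b hb
    have := ginv S hinj hmove hswap hstable hstart t b _ hb
    have hbx : b = x := (gseq S t).injective this
    rw [hbx, hxu] at hb
    cases hb
  exact no_three_empty hc (S t) (hinj t) RedV.w (RedV.leaf l) (RedV.leaf (gseq S t x))
    (by exact fun hh => by cases hh) (by exact fun hh => by cases hh)
    (by intro hh; exact hne (RedV.leaf.inj hh).symm) hw hl hgl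

omit hinj hmove hswap hstable hstart

/-- the relation of swaps emitted before time `N`. -/
def rels (N : ℕ) : Fin c → Fin c → Prop := fun α β =>
  ∃ t < N, gseq S (t + 1) ≠ gseq S t ∧ gseq S (t + 1) = Equiv.swap α β * gseq S t

lemma rels_mono {N N' : ℕ} (h : N ≤ N') {α β : Fin c} (hr : rels S N α β) :
    rels S N' α β := by
  obtain ⟨t, ht, h1, h2⟩ := hr
  exact ⟨t, lt_of_lt_of_le ht h, h1, h2⟩

lemma conn (N : ℕ) : ∀ x, Relation.EqvGen (rels S N) x (gseq S N x) := by
  induction N with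
  | zero =>
    intro x
    rw [gseq_zero]
    exact Relation.EqvGen.refl x
  | succ N ih =>
    have ih' : ∀ x, Relation.EqvGen (rels S (N + 1)) x (gseq S N x) := fun x =>
      Relation.EqvGen.mono (r := rels S N) (p := rels S (N + 1)) (fun a b h => rels_mono S (Nat.le_succ N) h) _ _ (ih x)
    by_cases hE : gseq S (N + 1) = gseq S N
    · rw [hE]; exact ih'
    · rcases gseq_step S N with ⟨heq, -⟩ | ⟨x0, l0, hent, hne0, heq⟩
      · exact absurd heq hE
      have hr : rels S (N + 1) (gseq S N x0) l0 := ⟨N, Nat.lt_succ_self N, hE, heq⟩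
      intro x
      rw [heq, Equiv.Perm.mul_apply]
      by_cases h1 : gseq S N x = gseq S N x0
      · rw [h1, Equiv.swap_apply_left]
        exact Relation.EqvGen.trans _ _ _ (h1 ▸ ih' x) (Relation.EqvGen.rel _ _ hr)
      · by_cases h2 : gseq S N x = l0
        · rw [h2, Equiv.swap_apply_right]
          exact Relation.EqvGen.trans _ _ _ (h2 ▸ ih' x)
            (Relation.EqvGen.symm _ _ (Relation.EqvGen.rel _ _ hr))
        · rw [Equiv.swap_apply_of_ne_of_ne h1 h2]
          exact ih' x

end Schedule

/-- adding one generating pair decreases the number of classes by at most one. -/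
lemma merge_count {α : Type} [Finite α] (r r' : α → α → Prop) (a b : α)
    (hchar : ∀ x y, r' x y ↔ r x y ∨ (x = a ∧ y = b) ∨ (x = b ∧ y = a)) :
    Nat.card (Quotient (Relation.EqvGen.setoid r)) ≤
      Nat.card (Quotient (Relation.EqvGen.setoid r')) + 1 := by
  classical
  set E := Relation.EqvGen r with hE
  have he : Equivalence E := Relation.EqvGen.is_equivalence r
  have hkey : ∀ x y, Relation.EqvGen r' x y →
      E x y ∨ (E x a ∧ E b y) ∨ (E x b ∧ E a y) := by
    intro x y h
    induction h with
    | rel x y hxy =>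
      rcases (hchar x y).1 hxy with h | ⟨h1, h2⟩ | ⟨h1, h2⟩
      · exact Or.inl (Relation.EqvGen.rel _ _ h)
      · exact Or.inr (Or.inl ⟨by rw [h1]; exact he.refl a, by rw [h2]; exact he.refl b⟩)
      · exact Or.inr (Or.inr ⟨by rw [h1]; exact he.refl b, by rw [h2]; exact he.refl a⟩)
    | refl x => exact Or.inl (he.refl x)
    | symm x y _ ih =>
      rcases ih with h | ⟨h1, h2⟩ | ⟨h1, h2⟩
      · exact Or.inl (he.symm h)
      · exact Or.inr (Or.inr ⟨he.symm h2, he.symm h1⟩)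
      · exact Or.inr (Or.inl ⟨he.symm h2, he.symm h1⟩)
    | trans x y z _ _ ih1 ih2 =>
      rcases ih1 with h | ⟨h1, h2⟩ | ⟨h1, h2⟩ <;>
        rcases ih2 with h' | ⟨h1', h2'⟩ | ⟨h1', h2'⟩
      · exact Or.inl (he.trans h h')
      · exact Or.inr (Or.inl ⟨he.trans h h1', h2'⟩)
      · exact Or.inr (Or.inr ⟨he.trans h h1', h2'⟩)
      · exact Or.inr (Or.inl ⟨h1, he.trans h2 h'⟩)
      · exact Or.inr (Or.inl ⟨h1, h2'⟩)
      · exact Or.inl (he.trans h1 h2')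
      · exact Or.inr (Or.inr ⟨h1, he.trans h2 h'⟩)
      · exact Or.inl (he.trans h1 h2')
      · exact Or.inr (Or.inr ⟨h1, h2'⟩)
  have hmono : ∀ x y, E x y → Relation.EqvGen r' x y := fun x y h =>
    Relation.EqvGen.mono (r := r) (p := r') (fun u v hr => (hchar u v).2 (Or.inl hr)) x y h
  let sE := Relation.EqvGen.setoid r
  let sE' := Relation.EqvGen.setoid r'
  let f : α → Quotient sE' ⊕ Unit := fun z =>
    if E z b ∧ ¬E z a then Sum.inr () else Sum.inl (Quotient.mk sE' z)
  have hresp : ∀ z z', E z z' → f z = f z' := by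
    intro z z' h
    have hb : E z b ↔ E z' b := ⟨fun hh => he.trans (he.symm h) hh, fun hh => he.trans h hh⟩
    have ha : E z a ↔ E z' a := ⟨fun hh => he.trans (he.symm h) hh, fun hh => he.trans h hh⟩
    by_cases hcond : E z b ∧ ¬E z a
    · have hcond' : E z' b ∧ ¬E z' a := ⟨hb.1 hcond.1, fun hh => hcond.2 (ha.2 hh)⟩
      simp only [f, if_pos hcond, if_pos hcond']
    · have hcond' : ¬(E z' b ∧ ¬E z' a) := fun hh => hcond ⟨hb.2 hh.1, fun h2 => hh.2 (ha.1 h2)⟩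
      simp only [f, if_neg hcond, if_neg hcond']
      exact congrArg Sum.inl (Quotient.sound (hmono z z' h))
  let φ : Quotient sE → Quotient sE' ⊕ Unit := Quotient.lift f hresp
  have hφinj : Function.Injective φ := by
    intro q1 q2
    induction q1 using Quotient.ind
    induction q2 using Quotient.ind
    rename_i z z'
    intro hq
    simp only [φ, f, Quotient.lift_mk] at hq
    apply Quotient.sound
    by_cases h1 : E z b ∧ ¬E z a <;> by_cases h2 : E z' b ∧ ¬E z' a
    · exact he.trans h1.1 (he.symm h2.1)
    · rw [if_pos h1, if_neg h2] at hq; exact absurd hq (by simp)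
    · rw [if_neg h1, if_pos h2] at hq; exact absurd hq (by simp)
    · rw [if_neg h1, if_neg h2] at hq
      have hq' : Quotient.mk sE' z = Quotient.mk sE' z' := Sum.inl.inj hq
      have hrr' : Relation.EqvGen r' z z' := Quotient.exact hq'
      rcases hkey z z' hrr' with h | ⟨ha1, ha2⟩ | ⟨ha1, ha2⟩
      · exact h
      · have hz'b : E z' b := he.symm ha2
        have hz'a : E z' a := by
          by_contra hcc
          exact h2 ⟨hz'b, hcc⟩
        exact he.trans ha1 (he.symm hz'a)
      · have hza : E z a := by
          by_contra hcc
          exact h1 ⟨ha1, hcc⟩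
        exact he.trans hza ha2
  have hle := Nat.card_le_card_of_injective φ hφinj
  have h2 : Nat.card Unit = 1 := Nat.card_unique
  rw [Nat.card_sum, h2] at hle
  exact hle
end RedEdgeAux

namespace RedEdgeAux

lemma count {c : ℕ} (S : ℕ → Fin c → RedV c)
    [DecidablePred fun t => gseq S (t + 1) ≠ gseq S t] (N : ℕ) :
    c ≤ Nat.card (Quotient (Relation.EqvGen.setoid (rels S N))) +
      ((Finset.range N).filter (fun t => gseq S (t + 1) ≠ gseq S t)).card := by
  induction N with
  | zero =>
    have hid : ∀ x y, Relation.EqvGen (rels S 0) x y → x = y := by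
      intro x y h
      induction h with
      | rel x y h => obtain ⟨t, ht, -⟩ := h; omega
      | refl x => rfl
      | symm _ _ _ ih => exact ih.symm
      | trans _ _ _ _ _ ih1 ih2 => exact ih1.trans ih2
    have e : Quotient (Relation.EqvGen.setoid (rels S 0)) ≃ Fin c :=
      { toFun := Quotient.lift id (fun x y h => hid x y h)
        invFun := fun x => Quotient.mk _ x
        left_inv := by
          intro q
          induction q using Quotient.ind
          rfl
        right_inv := fun x => rfl }
    rw [Finset.range_zero, Finset.filter_empty, Finset.card_empty, Nat.add_zero,
      Nat.card_congr e, Nat.card_eq_fintype_card, Fintype.card_fin]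
  | succ N ih =>
    by_cases hE : gseq S (N + 1) = gseq S N
    · have hrr : rels S (N + 1) = rels S N := by
        funext α β
        apply propext
        constructor
        · rintro ⟨t, ht, hne, hh⟩
          have htN : t < N := by
            rcases Nat.lt_succ_iff_lt_or_eq.1 ht with h | h
            · exact h
            · subst h; exact absurd hE hne
          exact ⟨t, htN, hne, hh⟩
        · exact fun h => rels_mono S (Nat.le_succ N) h
      have hfil : (Finset.range (N + 1)).filter (fun t => gseq S (t + 1) ≠ gseq S t) =
          (Finset.range N).filter (fun t => gseq S (t + 1) ≠ gseq S t) := by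
        rw [Finset.range_add_one, Finset.filter_insert, if_neg (by simpa using hE)]
      rw [hrr, hfil]
      exact ih
    · rcases gseq_step S N with ⟨heq, -⟩ | ⟨x0, l0, hent, hne0, heq⟩
      · exact absurd heq hE
      set α := gseq S N x0 with hα
      have hchar : ∀ x y, rels S (N + 1) x y ↔
          rels S N x y ∨ (x = α ∧ y = l0) ∨ (x = l0 ∧ y = α) := by
        intro x y
        constructor
        · rintro ⟨t, ht, hne, hh⟩
          rcases Nat.lt_succ_iff_lt_or_eq.1 ht with htN | htN
          · exact Or.inl ⟨t, htN, hne, hh⟩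
          · subst htN
            have hsw : Equiv.swap x y = Equiv.swap α l0 :=
              mul_right_cancel (hh.symm.trans heq)
            have hxy : x ≠ y := by
              rintro rfl
              rw [Equiv.swap_self] at hh
              exact hne (by rw [hh]; exact one_mul _)
            have hyx : Equiv.swap α l0 x = y := by
              rw [← hsw]; exact Equiv.swap_apply_left x y
            by_cases hxα : x = α
            · subst hxα
              rw [Equiv.swap_apply_left] at hyx
              exact Or.inr (Or.inl ⟨rfl, hyx.symm⟩)
            · by_cases hxl : x = l0
              · subst hxl
                rw [Equiv.swap_apply_right] at hyx
                exact Or.inr (Or.inr ⟨rfl, hyx.symm⟩)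
              · rw [Equiv.swap_apply_of_ne_of_ne hxα hxl] at hyx
                exact absurd hyx hxy
        · rintro (h | ⟨h1, h2⟩ | ⟨h1, h2⟩)
          · exact rels_mono S (Nat.le_succ N) h
          · exact ⟨N, Nat.lt_succ_self N, hE, by rw [h1, h2]; exact heq⟩
          · exact ⟨N, Nat.lt_succ_self N, hE, by rw [h1, h2, Equiv.swap_comm]; exact heq⟩
      have hmc := merge_count (rels S N) (rels S (N + 1)) α l0 hchar
      have hfil : ((Finset.range (N + 1)).filter (fun t => gseq S (t + 1) ≠ gseq S t)).card =
          ((Finset.range N).filter (fun t => gseq S (t + 1) ≠ gseq S t)).card + 1 := by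
        rw [Finset.range_add_one, Finset.filter_insert, if_pos (by simpa using hE),
          Finset.card_insert_of_notMem (fun hmem => by
            have := Finset.mem_of_mem_filter _ hmem
            simp at this)]
      rw [hfil]
      omega

end RedEdgeAux

open RedEdgeAux in
/-- In any feasible schedule, a red edge of size c ≥ 2 attached to a leaf u with
tree-neighbor w requires at least c + 1 turns to resolve all its agents (agent `a`
starts on leaf `a` and targets leaf `a+1`, cyclically), and its agents occupy w
during at least c - 1 turns. -/
theorem red_edge_lower_bound
    (c m : ℕ) (hc : 2 ≤ c)
    (s : Fin (m + 1) → Fin c → RedV c)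
    (hstart : ∀ a : Fin c, s 0 a = RedV.leaf a)
    (hinj : ∀ i, Function.Injective (s i))
    (hmove : ∀ i : Fin m, ∀ a, s i.succ a = s i.castSucc a ∨
        RedV.adj (s i.castSucc a) (s i.succ a))
    (hswap : ∀ i : Fin m, ∀ a b, a ≠ b →
        ¬(s i.succ a = s i.castSucc b ∧ s i.succ b = s i.castSucc a))
    (hend : ∀ a : Fin c,
        s (Fin.last m) a = RedV.leaf ⟨(a.val + 1) % c, Nat.mod_lt _ (by omega)⟩) :
    c + 1 ≤ m ∧ c - 1 ≤ Nat.card {i : Fin (m + 1) // ∃ a, s i a = RedV.w} := by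
  classical
  have hzero : (0 : Fin (m + 1)) = ⟨0, by omega⟩ := by
    exact Fin.ext (by simp)
  -- m is nonzero
  have hm0 : m ≠ 0 := by
    intro h
    subst h
    set a0 : Fin c := ⟨0, by omega⟩ with ha0
    have h1 := hstart a0
    have h2 := hend a0
    have hlast : (Fin.last 0) = (0 : Fin 1) := rfl
    rw [hlast, h1] at h2
    have := RedV.leaf.inj h2
    have hv := congrArg Fin.val this
    simp only [ha0] at hv
    rw [Nat.mod_eq_of_lt (by omega : (0 : ℕ) + 1 < c)] at hv
    simp at hv
  -- the ℕ-indexed schedule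
  set S : ℕ → Fin c → RedV c := fun t a => s ⟨min t m, by omega⟩ a with hSdef
  have hSle : ∀ t (ht : t ≤ m), ∀ a, S t a = s ⟨t, by omega⟩ a := by
    intro t ht a
    simp only [hSdef]
    congr 2
    omega
  have hinj' : ∀ t, Function.Injective (S t) := fun t => hinj _
  have hstable' : ∀ t, m ≤ t → S (t + 1) = S t := by
    intro t ht
    funext a
    simp only [hSdef]
    congr 2
    omega
  have hmove' : ∀ t, t < m → ∀ x, S (t + 1) x = S t x ∨ RedV.adj (S t x) (S (t + 1) x) := by
    intro t ht x
    rw [hSle (t + 1) (by omega) x, hSle t (by omega) x]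
    exact hmove ⟨t, ht⟩ x
  have hswap' : ∀ t, t < m → ∀ a b, a ≠ b →
      ¬(S (t + 1) a = S t b ∧ S (t + 1) b = S t a) := by
    intro t ht a b hab
    rw [hSle (t + 1) (by omega) a, hSle t (by omega) b, hSle (t + 1) (by omega) b,
      hSle t (by omega) a]
    exact hswap ⟨t, ht⟩ a b hab
  have hstart' : ∀ x, S 0 x = RedV.leaf x := by
    intro x
    rw [hSle 0 (by omega) x, ← hzero]
    exact hstart x
  have hend' : ∀ x : Fin c, S m x = RedV.leaf ⟨(x.val + 1) % c, Nat.mod_lt _ (by omega)⟩ := by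
    intro x
    rw [hSle m le_rfl x]
    exact hend x
  -- each agent's first departure from its leaf
  have hexm : ∀ a : Fin c, S m a ≠ RedV.leaf a := by
    intro a h
    rw [hend' a] at h
    have hv := congrArg Fin.val (RedV.leaf.inj h)
    simp only at hv
    rcases Nat.lt_or_ge (a.val + 1) c with hlt | hge
    · rw [Nat.mod_eq_of_lt hlt] at hv; omega
    · have hac : a.val + 1 = c := by omega
      rw [hac, Nat.mod_self] at hv
      omega
  have hF : ∀ a : Fin c, ∃ t, 1 ≤ t ∧ t < m ∧ S t a = RedV.u := by
    intro a
    have hex : ∃ t, S t a ≠ RedV.leaf a := ⟨m, hexm a⟩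
    set N := Nat.find hex with hNdef
    have hNp : S N a ≠ RedV.leaf a := Nat.find_spec hex
    have hNle : N ≤ m := Nat.find_min' hex (hexm a)
    have hN0 : N ≠ 0 := by
      intro h
      rw [h] at hNp
      exact hNp (hstart' a)
    have hNprev : S (N - 1) a = RedV.leaf a := by
      have := Nat.find_min hex (show N - 1 < N by omega)
      simpa using this
    have hN1 : N - 1 + 1 = N := by omega
    rcases hmove' (N - 1) (by omega) a with he | ha
    · rw [hN1, hNprev] at he
      exact absurd he hNp
    · rw [hN1, hNprev] at ha
      have hu := adj_from_leaf ha
      have hNm : N < m := by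
        rcases Nat.lt_or_ge N m with h | h
        · exact h
        · have : N = m := by omega
          rw [this] at hu
          rw [hend' a] at hu
          exact absurd hu (by exact fun hh => by cases hh)
      exact ⟨N, by omega, hNm, hu⟩
  choose F hF1 hF2 hF3 using hF
  have hpart1 : c + 1 ≤ m := by
    have hcount := Finset.card_le_card_of_injOn
      (s := (Finset.univ : Finset (Fin c))) (t := Finset.Ico 1 m) F
      (fun a _ => Finset.mem_Ico.2 ⟨hF1 a, hF2 a⟩)
      (fun a _ b _ hab => by
        apply hinj' (F a)
        rw [hF3 a, hab, hF3 b])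
    rw [Finset.card_univ, Fintype.card_fin, Nat.card_Ico] at hcount
    omega
  refine ⟨hpart1, ?_⟩
  -- part 2
  have hgm : ∀ x : Fin c, gseq S m x = ⟨(x.val + 1) % c, Nat.mod_lt _ (by omega)⟩ :=
    fun x => ginv S hinj' hmove' hswap' hstable' hstart' m x _ (hend' x)
  have hrel : ∀ x : Fin c,
      Relation.EqvGen (rels S m) x ⟨(x.val + 1) % c, Nat.mod_lt _ (by omega)⟩ := by
    intro x
    have h := conn S m x
    rw [hgm x] at h
    exact h
  have hchain : ∀ k, (hk : k < c) → Relation.EqvGen (rels S m) ⟨0, by omega⟩ ⟨k, hk⟩ := by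
    intro k
    induction k with
    | zero => intro hk; exact Relation.EqvGen.refl _
    | succ k ih =>
      intro hk
      have hk' : k < c := by omega
      have h1 := ih hk'
      have h2 := hrel ⟨k, hk'⟩
      have heq : (⟨(k + 1) % c, Nat.mod_lt _ (by omega)⟩ : Fin c) = ⟨k + 1, hk⟩ :=
        Fin.ext (by simp [Nat.mod_eq_of_lt hk])
      rw [heq] at h2
      exact Relation.EqvGen.trans _ _ _ h1 h2
  have hallrel : ∀ x y : Fin c, Relation.EqvGen (rels S m) x y := by
    intro x y
    obtain ⟨kx, hkx⟩ := x
    obtain ⟨ky, hky⟩ := y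
    exact Relation.EqvGen.trans _ _ _
      (Relation.EqvGen.symm _ _ (hchain kx hkx)) (hchain ky hky)
  have hcard1 : Nat.card (Quotient (Relation.EqvGen.setoid (rels S m))) = 1 := by
    rw [Nat.card_eq_one_iff_unique]
    constructor
    · constructor
      intro q q'
      induction q using Quotient.ind
      induction q' using Quotient.ind
      exact Quotient.sound (hallrel _ _)
    · exact ⟨Quotient.mk _ ⟨0, by omega⟩⟩
  have hcnt := count S m
  rw [hcard1] at hcnt
  -- inject the emission steps into w-occupied times
  set T := (Finset.range m).filter (fun t => gseq S (t + 1) ≠ gseq S t) with hTdef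
  have hTocc : ∀ t, t ∈ T → t < m ∧ ∃ z, S t z = RedV.w := by
    intro t ht
    rw [hTdef, Finset.mem_filter, Finset.mem_range] at ht
    obtain ⟨htm, hne⟩ := ht
    obtain ⟨-, z, hz⟩ := emits_w S hinj' hmove' hswap' hstable' hstart' hc hne
    exact ⟨htm, z, hz⟩
  let ψ : {t : ℕ // t ∈ T} → {i : Fin (m + 1) // ∃ a, s i a = RedV.w} := fun p =>
    ⟨⟨p.1, by have := (hTocc p.1 p.2).1; omega⟩, by
      obtain ⟨htm, z, hz⟩ := hTocc p.1 p.2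
      rw [hSle p.1 (by omega) z] at hz
      exact ⟨z, hz⟩⟩
  have hψ : Function.Injective ψ := by
    intro p q h
    have hval : p.1 = q.1 := congrArg (fun i => (Subtype.val i).val) h
    exact Subtype.ext hval
  have hTcard : T.card ≤ Nat.card {i : Fin (m + 1) // ∃ a, s i a = RedV.w} := by
    have h1 : Nat.card {t : ℕ // t ∈ T} = T.card := by
      rw [Nat.card_eq_fintype_card, Fintype.card_coe]
    rw [← h1]
    exact Nat.card_le_card_of_injective ψ hψ
  omega
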